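/- Let G=(V,E) be a mixed graph and A, B, C disjoint subsets of V. Then A ⊥_m B | C in G if and only if C separates A from B in the augmented graph (G_{an(A∪B∪C)})^a of the induced subgraph on the ancestor set of A∪B∪C. -/

import Mathlib

structure MixedGraph (V : Type*) where
  dir : V → V → Prop
  bi : V → V → Prop
  bi_symm : ∀ {a b : V}, bi a b → bi b a

namespace MixedGraph

variable {V : Type*}

/-- A single edge traversal: a directed edge traversed forwards (`a → b`),
a directed edge traversed backwards (`a ← b`), or a bi-directed edge (`a ↔ b`). -/
inductive Step (G : MixedGraph V) : V → V → Type _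
  | fwd {a b : V} : G.dir a b → G.Step a b
  | bwd {a b : V} : G.dir b a → G.Step a b
  | bi  {a b : V} : G.bi a b → G.Step a b

/-- The edge has an arrowhead at its second endpoint. -/
def Step.arrowAtEnd {G : MixedGraph V} : {a b : V} → G.Step a b → Prop
  | _, _, .fwd _ => True
  | _, _, .bwd _ => False
  | _, _, .bi _ => True

/-- The edge has an arrowhead at its first endpoint. -/
def Step.arrowAtStart {G : MixedGraph V} : {a b : V} → G.Step a b → Prop
  | _, _, .fwd _ => False
  | _, _, .bwd _ => True
  | _, _, .bi _ => True

/-- Paths (possibly self-intersecting) in a mixed graph. -/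
inductive Walk (G : MixedGraph V) : V → V → Type _
  | nil {a : V} : G.Walk a a
  | cons {a b c : V} : G.Step a b → G.Walk b c → G.Walk a c

namespace Walk

variable {G : MixedGraph V}

def length : {a b : V} → G.Walk a b → ℕ
  | _, _, .nil => 0
  | _, _, .cons _ w => w.length + 1

def verts : {a b : V} → G.Walk a b → List V
  | a, _, .nil => [a]
  | a, _, .cons _ w => a :: w.verts

/-- The intermediate vertices of a walk. -/
def interm {a b : V} (w : G.Walk a b) : List V := w.verts.tail.dropLast

def append : {a b c : V} → G.Walk a b → G.Walk b c → G.Walk a c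
  | _, _, _, .nil, w' => w'
  | _, _, _, .cons s w, w' => .cons s (w.append w')

/-- Every intermediate vertex of the walk is a collider. -/
def IsPureCollider : {a b : V} → G.Walk a b → Prop
  | _, _, .nil => True
  | _, _, .cons _ .nil => True
  | _, _, .cons s (.cons t w) =>
      s.arrowAtEnd ∧ t.arrowAtStart ∧ (Walk.cons t w).IsPureCollider

/-- The walk is m-connecting given `C`: every non-collider on it is outside `C`
and every collider on it is in `C`. -/
def IsMConnecting (C : Set V) : {a b : V} → G.Walk a b → Prop
  | _, _, .nil => True
  | _, _, .cons _ .nil => True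
  | _, _, .cons (b := m) s (.cons t w) =>
      ((s.arrowAtEnd ∧ t.arrowAtStart) ↔ m ∈ C) ∧ (Walk.cons t w).IsMConnecting C

end Walk

variable (G : MixedGraph V)

/-- `A` and `B` are m-separated given `C`: no m-connecting walk given `C`
between a vertex of `A` and a vertex of `B`. -/
def MSep (A B C : Set V) : Prop :=
  ∀ a ∈ A, ∀ b ∈ B, ∀ w : G.Walk a b, ¬ w.IsMConnecting C

/-- `u` and `v` are joined by a pure-collider path (with at least one edge). -/
def ColliderConn (u v : V) : Prop :=
  ∃ w : G.Walk u v, 0 < w.length ∧ w.IsPureCollider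

/-- Vertices connected to `S` by a (possibly empty) path of bi-directed edges. -/
def district (S : Set V) : Set V :=
  {v | ∃ s ∈ S, Relation.ReflTransGen G.bi s v}

/-- Children of vertices in `S`. -/
def ch (S : Set V) : Set V := {v | ∃ a ∈ S, G.dir a v}

/-- Ancestors of `S` (including `S` itself). -/
def an (S : Set V) : Set V :=
  {v | ∃ s ∈ S, Relation.ReflTransGen G.dir v s}

/-- The subgraph induced by `W`: edges with both endpoints in `W`. -/
def induce (W : Set V) : MixedGraph V where
  dir a b := G.dir a b ∧ a ∈ W ∧ b ∈ W
  bi a b := G.bi a b ∧ a ∈ W ∧ b ∈ W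
  bi_symm h := ⟨G.bi_symm h.1, h.2.2, h.2.1⟩

/-- Separation in an undirected graph with adjacency `adj`: every path between
`A` and `B` intersects `C`, i.e. `B` is not reachable from `A` avoiding `C`. -/
def UndirSep (adj : V → V → Prop) (A B C : Set V) : Prop :=
  ∀ a ∈ A, ∀ b ∈ B, ¬ Relation.ReflTransGen (fun x y => adj x y ∧ y ∉ C) a b

inductive EdgeKind | fwd | bwd | bi
deriving DecidableEq

def Step.kind {G : MixedGraph V} : {a b : V} → G.Step a b → EdgeKind
  | _, _, .fwd _ => .fwd
  | _, _, .bwd _ => .bwd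
  | _, _, .bi _ => .bi

def Walk.kinds {G : MixedGraph V} : {a b : V} → G.Walk a b → List EdgeKind
  | _, _, .nil => []
  | _, _, .cons s w => s.kind :: w.kinds

end MixedGraph

namespace MixedGraph

variable {V : Type*} {G : MixedGraph V}

/-! ### Step conversions between `G` and induced subgraphs -/

def Step.ofInduce {W : Set V} : ∀ {a b : V}, (G.induce W).Step a b → G.Step a b
  | _, _, .fwd h => .fwd h.1
  | _, _, .bwd h => .bwd h.1
  | _, _, .bi h => .bi h.1

lemma Step.ofInduce_arrowAtEnd {W : Set V} {a b : V} (s : (G.induce W).Step a b) :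
    s.ofInduce.arrowAtEnd ↔ s.arrowAtEnd := by
  cases s <;> exact Iff.rfl

lemma Step.ofInduce_arrowAtStart {W : Set V} {a b : V} (s : (G.induce W).Step a b) :
    s.ofInduce.arrowAtStart ↔ s.arrowAtStart := by
  cases s <;> exact Iff.rfl

lemma Step.ofInduce_mem {W : Set V} {a b : V} (s : (G.induce W).Step a b) :
    a ∈ W ∧ b ∈ W := by
  cases s with
  | fwd h => exact ⟨h.2.1, h.2.2⟩
  | bwd h => exact ⟨h.2.2, h.2.1⟩
  | bi h => exact ⟨h.2.1, h.2.2⟩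

def Step.toInduce {W : Set V} : ∀ {a b : V}, G.Step a b → a ∈ W → b ∈ W → (G.induce W).Step a b
  | _, _, .fwd h, ha, hb => .fwd ⟨h, ha, hb⟩
  | _, _, .bwd h, ha, hb => .bwd ⟨h, hb, ha⟩
  | _, _, .bi h, ha, hb => .bi ⟨h, ha, hb⟩

lemma Step.toInduce_arrowAtEnd {W : Set V} {a b : V} (s : G.Step a b) (ha : a ∈ W) (hb : b ∈ W) :
    (s.toInduce ha hb).arrowAtEnd ↔ s.arrowAtEnd := by
  cases s <;> exact Iff.rfl

lemma Step.toInduce_arrowAtStart {W : Set V} {a b : V} (s : G.Step a b) (ha : a ∈ W) (hb : b ∈ W) :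
    (s.toInduce ha hb).arrowAtStart ↔ s.arrowAtStart := by
  cases s <;> exact Iff.rfl

/-! ### snoc and walk predicates -/

namespace Walk

def snoc {a b c : V} (w : G.Walk a b) (s : G.Step b c) : G.Walk a c :=
  w.append (.cons s .nil)

lemma snoc_cons {a b c d : V} (r : G.Step a b) (w : G.Walk b c) (s : G.Step c d) :
    (Walk.cons r w).snoc s = Walk.cons r (w.snoc s) := rfl

/-- Whether the last edge of a walk has an arrowhead at the final vertex
(`False` for the empty walk). -/
def LastArrow : ∀ {a b : V}, G.Walk a b → Prop
  | _, _, .nil => False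
  | _, _, .cons s .nil => s.arrowAtEnd
  | _, _, .cons _ (.cons t w) => (Walk.cons t w).LastArrow

/-- Whether the first edge of a walk has an arrowhead at the initial vertex
(`False` for the empty walk). -/
def FirstStart : ∀ {a b : V}, G.Walk a b → Prop
  | _, _, .nil => False
  | _, _, .cons s _ => s.arrowAtStart

lemma lastArrow_snoc : ∀ {a b c : V} (w : G.Walk a b) (s : G.Step b c),
    (w.snoc s).LastArrow ↔ s.arrowAtEnd
  | _, _, _, .nil, s => Iff.rfl
  | _, _, _, .cons r .nil, s => Iff.rfl
  | _, _, _, .cons r (.cons t w), s => lastArrow_snoc (.cons t w) s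

lemma mconn_snoc {C : Set V} : ∀ {a b c : V} (w : G.Walk a b) (s : G.Step b c),
    w.IsMConnecting C → ((w.LastArrow ∧ s.arrowAtStart) ↔ b ∈ C) →
    (w.snoc s).IsMConnecting C
  | _, _, _, .nil, s, _, _ => trivial
  | _, _, _, .cons r .nil, s, _, h => ⟨h, trivial⟩
  | _, _, _, .cons r (.cons t w), s, hm, h =>
      ⟨hm.1, mconn_snoc (.cons t w) s hm.2 h⟩

lemma mconn_tail {C : Set V} {a b c : V} (s : G.Step a b) (w : G.Walk b c)
    (h : (Walk.cons s w).IsMConnecting C) : w.IsMConnecting C := by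
  cases w with
  | nil => trivial
  | cons t w' => exact h.2

lemma start_mem_verts {a b : V} (w : G.Walk a b) : a ∈ w.verts := by
  cases w <;> simp [verts]

end Walk

/-! ### ancestor lemmas -/

lemma an_trans {S : Set V} {x y : V} (h : Relation.ReflTransGen G.dir x y)
    (hy : y ∈ G.an S) : x ∈ G.an S := by
  obtain ⟨s, hs, hys⟩ := hy
  exact ⟨s, hs, h.trans hys⟩

lemma mem_an_of_mem {S : Set V} {x : V} (hx : x ∈ S) : x ∈ G.an S :=
  ⟨x, hx, .refl⟩

lemma an_dir {S : Set V} {x y : V} (h : G.dir x y) (hy : y ∈ G.an S) : x ∈ G.an S :=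
  an_trans (.single h) hy

/-- Vertices starting a forward-directed edge on an m-connecting walk are ancestors. -/
lemma anc_of_fwd_walk {S C : Set V} (hCS : C ⊆ S) :
    ∀ {m n y : V} (h : G.dir m n) (w : G.Walk n y),
    (Walk.cons (.fwd h) w).IsMConnecting C → y ∈ G.an S → m ∈ G.an S
  | _, _, _, h, .nil, _, hy => an_dir h hy
  | m, n, y, h, .cons t w, hm, hy => by
      by_cases ht : t.arrowAtStart
      · have hn : n ∈ C := hm.1.mp ⟨trivial, ht⟩
        exact an_dir h (mem_an_of_mem (hCS hn))
      · cases t with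
        | fwd h' => exact an_dir h (anc_of_fwd_walk hCS h' w hm.2 hy)
        | bwd h' => exact absurd trivial ht
        | bi h' => exact absurd trivial ht

/-- All vertices of an m-connecting walk between two ancestors of `S` are ancestors of `S`. -/
lemma verts_anc {S C : Set V} (hCS : C ⊆ S) :
    ∀ {x y : V} (w : G.Walk x y), w.IsMConnecting C → x ∈ G.an S → y ∈ G.an S →
    ∀ v ∈ w.verts, v ∈ G.an S
  | x, _, .nil, _, hx, _, v, hv => by
      simp [Walk.verts] at hv; subst hv; exact hx
  | x, y, .cons (b := m) s w, hm, hx, hy, v, hv => by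
      have hmid : m ∈ G.an S := by
        cases w with
        | nil => exact hy
        | cons t w' =>
          by_cases hcol : s.arrowAtEnd ∧ t.arrowAtStart
          · exact mem_an_of_mem (hCS (hm.1.mp hcol))
          · rcases not_and_or.mp hcol with hs | ht
            · cases s with
              | fwd h' => exact absurd trivial hs
              | bwd h' => exact an_dir h' hx
              | bi h' => exact absurd trivial hs
            · cases t with
              | fwd h' => exact anc_of_fwd_walk hCS h' w' hm.2 hy
              | bwd h' => exact absurd trivial ht
              | bi h' => exact absurd trivial ht
      simp only [Walk.verts, List.mem_cons] at hv
      rcases hv with rfl | hv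
      · exact hx
      · exact verts_anc hCS w (Walk.mconn_tail s w hm) hmid hy v hv

/-! ### Direction 1: from an m-connecting walk to a path in the augmented graph -/

/-- Peel off the maximal initial pure-collider segment of an m-connecting walk. -/
lemma peel {A B C : Set V} :
    ∀ {x m y : V} (s : G.Step x m) (w : G.Walk m y),
    (Walk.cons s w).IsMConnecting C →
    (∀ v ∈ (Walk.cons s w).verts, v ∈ G.an (A ∪ B ∪ C)) → y ∉ C →
    ∃ z, z ∉ C ∧
      (∃ p : (G.induce (G.an (A ∪ B ∪ C))).Walk x z,
        p.IsPureCollider ∧ 0 < p.length ∧ (s.arrowAtStart → p.FirstStart)) ∧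
      ∃ w2 : G.Walk z y, w2.IsMConnecting C ∧ w2.length < (Walk.cons s w).length ∧
        ∀ v ∈ w2.verts, v ∈ G.an (A ∪ B ∪ C)
  | x, m, _, s, .nil, hmc, hverts, hy => by
      have hx : x ∈ G.an (A ∪ B ∪ C) := hverts x (Walk.start_mem_verts _)
      have hm : m ∈ G.an (A ∪ B ∪ C) := by
        apply hverts m; simp [Walk.verts]
      refine ⟨m, hy, ⟨.cons (s.toInduce hx hm) .nil, trivial, ?_, ?_⟩,
        .nil, trivial, ?_, ?_⟩
      · simp [Walk.length]
      · intro hs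
        exact (s.toInduce_arrowAtStart hx hm).mpr hs
      · simp [Walk.length]
      · intro v hv
        simp [Walk.verts] at hv; subst hv; exact hm
  | x, m, y, s, .cons (b := n) t w', hmc, hverts, hy => by
      have hx : x ∈ G.an (A ∪ B ∪ C) := hverts x (Walk.start_mem_verts _)
      have hm : m ∈ G.an (A ∪ B ∪ C) := by
        apply hverts m
        exact List.mem_cons_of_mem _ (Walk.start_mem_verts (Walk.cons t w'))
      have hverts' : ∀ v ∈ (Walk.cons t w').verts, v ∈ G.an (A ∪ B ∪ C) := by
        intro v hv
        exact hverts v (List.mem_cons_of_mem _ hv)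
      by_cases hmC : m ∈ C
      · have hcol : s.arrowAtEnd ∧ t.arrowAtStart := hmc.1.mpr hmC
        obtain ⟨z, hz, ⟨p', pure', len', hfs'⟩, w2, hw2, hlen2, hv2⟩ :=
          peel t w' hmc.2 hverts' hy
        refine ⟨z, hz, ⟨.cons (s.toInduce hx hm) p', ?_, ?_, ?_⟩, w2, hw2, ?_, hv2⟩
        · cases p' with
          | nil => simp [Walk.length] at len'
          | cons t' rest =>
            exact ⟨(s.toInduce_arrowAtEnd hx hm).mpr hcol.1, hfs' hcol.2, pure'⟩
        · simp [Walk.length]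
        · intro hs
          exact (s.toInduce_arrowAtStart hx hm).mpr hs
        · calc w2.length < (Walk.cons t w').length := hlen2
            _ < (Walk.cons s (Walk.cons t w')).length := by simp [Walk.length]
      · refine ⟨m, hmC, ⟨.cons (s.toInduce hx hm) .nil, trivial, ?_, ?_⟩,
          Walk.cons t w', hmc.2, ?_, hverts'⟩
        · simp [Walk.length]
        · intro hs
          exact (s.toInduce_arrowAtStart hx hm).mpr hs
        · simp [Walk.length]

/-- An m-connecting walk inside the ancestral set yields a `C`-avoiding path
in the augmented graph. -/
lemma to_aug {A B C : Set V} :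
    ∀ (n : ℕ) {x y : V} (w : G.Walk x y), w.length ≤ n → w.IsMConnecting C →
    (∀ v ∈ w.verts, v ∈ G.an (A ∪ B ∪ C)) → y ∉ C →
    Relation.ReflTransGen
      (fun u v => (G.induce (G.an (A ∪ B ∪ C))).ColliderConn u v ∧ v ∉ C) x y := by
  intro n
  induction n with
  | zero =>
    intro x y w hlen hm hv hy
    cases w with
    | nil => exact .refl
    | cons s w' => simp [Walk.length] at hlen
  | succ n ih =>
    intro x y w hlen hm hv hy
    cases w with
    | nil => exact .refl
    | cons s w' =>
      obtain ⟨z, hz, ⟨p, ppure, plen, _⟩, w2, hw2, hlen2, hv2⟩ := peel s w' hm hv hy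
      refine Relation.ReflTransGen.head ⟨⟨p, plen, ppure⟩, hz⟩ ?_
      exact ih w2 (by simpa [Walk.length] using Nat.lt_succ_iff.mp (lt_of_lt_of_le hlen2 hlen)) hw2 hv2 hy

/-! ### Direction 2: from an augmented-graph path to an m-connecting walk -/

section Dir2

variable {C : Set V}

lemma notC_of_rtg {u p : V}
    (h : Relation.ReflTransGen (fun x y => G.dir x y ∧ y ∉ C) u p) (hu : u ∉ C) :
    p ∉ C := by
  induction h with
  | refl => exact hu
  | tail _ h2 _ => exact h2.2

/-- Split a directed path at the first vertex in `C` (if any). -/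
lemma split_at_C {u s0 : V} (h : Relation.ReflTransGen G.dir u s0) (hu : u ∉ C) :
    (∃ p t0, t0 ∈ C ∧ Relation.ReflTransGen (fun x y => G.dir x y ∧ y ∉ C) u p ∧ G.dir p t0) ∨
    (s0 ∉ C ∧ Relation.ReflTransGen (fun x y => G.dir x y ∧ y ∉ C) u s0) := by
  induction h using Relation.ReflTransGen.head_induction_on with
  | refl => exact Or.inr ⟨hu, .refl⟩
  | @head x z h1 h2 ih =>
    by_cases hz : z ∈ C
    · exact Or.inl ⟨x, z, hz, .refl, h1⟩
    · rcases ih hz with ⟨p, t0, ht0, hzp, hpt⟩ | ⟨hs0, hzs0⟩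
      · exact Or.inl ⟨p, t0, ht0, .head ⟨h1, hz⟩ hzp, hpt⟩
      · exact Or.inr ⟨hs0, .head ⟨h1, hz⟩ hzs0⟩

/-- Extend an m-connecting walk down a `C`-free directed path. -/
lemma descend {u p : V}
    (h : Relation.ReflTransGen (fun x y => G.dir x y ∧ y ∉ C) u p) :
    u ∉ C → ∀ {a : V} (w : G.Walk a u), w.IsMConnecting C →
    ∃ w' : G.Walk a p, w'.IsMConnecting C := by
  induction h using Relation.ReflTransGen.head_induction_on with
  | refl => intro _ a w hw; exact ⟨w, hw⟩
  | head h1 h2 ih =>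
    intro hx a w hw
    refine ih h1.2 (w.snoc (.fwd h1.1)) (Walk.mconn_snoc w _ hw ?_)
    simp only [Step.arrowAtStart, and_false, false_iff]
    exact hx

/-- Walk back up a `C`-free directed path, arriving with a tail. -/
lemma ascend {u p : V}
    (h : Relation.ReflTransGen (fun x y => G.dir x y ∧ y ∉ C) u p) :
    ∀ {a : V} (w : G.Walk a p), w.IsMConnecting C → ¬ w.LastArrow →
    ∃ w' : G.Walk a u, w'.IsMConnecting C ∧ ¬ w'.LastArrow := by
  induction h with
  | refl => intro a w hw hl; exact ⟨w, hw, hl⟩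
  | tail h1 h2 ih =>
    intro a w hw hl
    refine ih (w.snoc (.bwd h2.1)) (Walk.mconn_snoc w _ hw ?_) ?_
    · simp only [Step.arrowAtStart]
      constructor
      · rintro ⟨h, _⟩; exact absurd h hl
      · intro h; exact absurd h h2.2
    · rw [Walk.lastArrow_snoc]
      simp [Step.arrowAtEnd]

/-- The reversal of a `C`-free directed path as an m-connecting walk,
arriving with a tail. -/
lemma revpath {u q : V}
    (h : Relation.ReflTransGen (fun x y => G.dir x y ∧ y ∉ C) u q) :
    u ∉ C →
    ∃ w : G.Walk q u, w.IsMConnecting C ∧ ¬ w.LastArrow := by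
  induction h using Relation.ReflTransGen.head_induction_on with
  | refl => exact fun _ => ⟨.nil, trivial, fun h => h⟩
  | head h1 h2 ih =>
    intro hx
    obtain ⟨w, hw, hl⟩ := ih h1.2
    refine ⟨w.snoc (.bwd h1.1), Walk.mconn_snoc w _ hw ?_, ?_⟩
    · simp only [Step.arrowAtStart]
      constructor
      · rintro ⟨h, _⟩; exact absurd h hl
      · intro h; exact absurd h h1.2
    · rw [Walk.lastArrow_snoc]
      simp [Step.arrowAtEnd]

end Dir2

/-- `u` can be reached from `A` by an m-connecting walk which, if `u ∈ C`,
arrives with an arrowhead. -/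
def MCReach (G : MixedGraph V) (A C : Set V) (u : V) : Prop :=
  ∃ a ∈ A, ∃ w : G.Walk a u, w.IsMConnecting C ∧ (u ∈ C → w.LastArrow)

section Extend

variable {A B C : Set V}

lemma extendStep {u v : V} (s : G.Step u v)
    (huS : u ∈ G.an (A ∪ B ∪ C))
    (husC : u ∈ C → s.arrowAtStart) (hvC : v ∈ C → s.arrowAtEnd)
    (h : MCReach G A C u) :
    MCReach G A C v ∨ ∃ a ∈ A, ∃ b ∈ B, ∃ w : G.Walk a b, w.IsMConnecting C := by
  obtain ⟨a, ha, w, hw, hla⟩ := h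
  by_cases huC : u ∈ C
  · refine Or.inl ⟨a, ha, w.snoc s, Walk.mconn_snoc w s hw ?_, ?_⟩
    · exact iff_of_true ⟨hla huC, husC huC⟩ huC
    · intro hv; rw [Walk.lastArrow_snoc]; exact hvC hv
  · by_cases hbad : w.LastArrow ∧ s.arrowAtStart
    · -- `u` would be a collider outside `C`: use ancestry to fix it
      obtain ⟨s0, hs0, hpath⟩ := huS
      rcases split_at_C hpath huC with ⟨p, t0, ht0, hup, hpt⟩ | ⟨hs0C, hus0⟩
      · -- detour down to `t0 ∈ C` and back
        have hpC : p ∉ C := notC_of_rtg hup huC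
        obtain ⟨w1, hw1⟩ := descend hup huC w hw
        have hw2 : (w1.snoc (.fwd hpt)).IsMConnecting C := by
          refine Walk.mconn_snoc w1 _ hw1 ?_
          simp only [Step.arrowAtStart, and_false, false_iff]
          exact hpC
        have hw3 : ((w1.snoc (.fwd hpt)).snoc (.bwd hpt)).IsMConnecting C := by
          refine Walk.mconn_snoc _ _ hw2 ?_
          refine iff_of_true ⟨?_, trivial⟩ ht0
          rw [Walk.lastArrow_snoc]; trivial
        have hl3 : ¬ ((w1.snoc (.fwd hpt)).snoc (.bwd hpt)).LastArrow := by
          rw [Walk.lastArrow_snoc]; simp [Step.arrowAtEnd]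
        obtain ⟨w4, hw4, hl4⟩ := ascend hup _ hw3 hl3
        refine Or.inl ⟨a, ha, w4.snoc s, Walk.mconn_snoc w4 s hw4 ?_, ?_⟩
        · constructor
          · rintro ⟨h', _⟩; exact absurd h' hl4
          · intro h'; exact absurd h' huC
        · intro hv; rw [Walk.lastArrow_snoc]; exact hvC hv
      · -- the directed path reaches `A ∪ B` avoiding `C`
        rcases hs0 with (hs0A | hs0B) | hs0C'
        · -- restart from `s0 ∈ A`
          obtain ⟨wr, hwr, hlr⟩ := revpath hus0 huC
          refine Or.inl ⟨s0, hs0A, wr.snoc s, Walk.mconn_snoc wr s hwr ?_, ?_⟩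
          · constructor
            · rintro ⟨h', _⟩; exact absurd h' hlr
            · intro h'; exact absurd h' huC
          · intro hv; rw [Walk.lastArrow_snoc]; exact hvC hv
        · -- descend into `B`: done globally
          obtain ⟨wB, hwB⟩ := descend hus0 huC w hw
          exact Or.inr ⟨a, ha, s0, hs0B, wB, hwB⟩
        · exact absurd hs0C' hs0C
    · refine Or.inl ⟨a, ha, w.snoc s, Walk.mconn_snoc w s hw (iff_of_false hbad huC), ?_⟩
      intro hv; rw [Walk.lastArrow_snoc]; exact hvC hv

/-- Traverse a pure-collider path of the induced ancestral graph. -/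
lemma traverse :
    ∀ {x y : V} (p : (G.induce (G.an (A ∪ B ∪ C))).Walk x y), p.IsPureCollider → y ∉ C →
    (x ∈ C → p.FirstStart) → MCReach G A C x →
    MCReach G A C y ∨ ∃ a ∈ A, ∃ b ∈ B, ∃ w : G.Walk a b, w.IsMConnecting C
  | _, _, .nil, _, _, _, hr => Or.inl hr
  | _, _, .cons s .nil, _, hy, hx, hr =>
      extendStep s.ofInduce (s.ofInduce_mem).1
        (fun hc => (s.ofInduce_arrowAtStart).mpr (hx hc))
        (fun hc => absurd hc hy) hr
  | _, _, .cons s (.cons t p'), hp, hy, hx, hr => by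
      obtain ⟨h1, h2, h3⟩ : s.arrowAtEnd ∧ t.arrowAtStart ∧ (Walk.cons t p').IsPureCollider := hp
      rcases extendStep s.ofInduce (s.ofInduce_mem).1
          (fun hc => (s.ofInduce_arrowAtStart).mpr (hx hc))
          (fun _ => (s.ofInduce_arrowAtEnd).mpr h1) hr with h | h
      · exact traverse (.cons t p') h3 hy (fun _ => h2) h
      · exact Or.inr h

/-- Walk along a `C`-avoiding path of the augmented graph. -/
lemma chain {x y : V}
    (h : Relation.ReflTransGen
      (fun u v => (G.induce (G.an (A ∪ B ∪ C))).ColliderConn u v ∧ v ∉ C) x y) :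
    x ∉ C → MCReach G A C x →
    MCReach G A C y ∨ ∃ a ∈ A, ∃ b ∈ B, ∃ w : G.Walk a b, w.IsMConnecting C := by
  induction h using Relation.ReflTransGen.head_induction_on with
  | refl => exact fun _ hr => Or.inl hr
  | @head x z h1 h2 ih =>
    intro hx hr
    obtain ⟨⟨p, hlen, hpure⟩, hz⟩ := h1
    rcases traverse p hpure hz (fun hc => absurd hc hx) hr with h | h
    · exact ih hz h
    · exact Or.inr h

end Extend

end MixedGraph

/-- `A ⊥_m B | C` in `G` iff `C` separates `A` and `B` in the augmented graph of the
subgraph induced by `an(A∪B∪C)` (adjacency = collider connectedness). -/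
theorem stmt_8 {V : Type*} (G : MixedGraph V) (A B C : Set V)
    (hAB : Disjoint A B) (hAC : Disjoint A C) (hBC : Disjoint B C) :
    G.MSep A B C ↔
      MixedGraph.UndirSep
        (fun u v => (G.induce (G.an (A ∪ B ∪ C))).ColliderConn u v) A B C := by
  constructor
  · intro hms a ha b hb hr
    have haC : a ∉ C := Set.disjoint_left.mp hAC ha
    have start : MixedGraph.MCReach G A C a :=
      ⟨a, ha, .nil, trivial, fun hc => absurd hc haC⟩
    rcases MixedGraph.chain hr haC start with h | h
    · obtain ⟨a', ha', w, hw, -⟩ := h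
      exact hms a' ha' b hb w hw
    · obtain ⟨a', ha', b', hb', w, hw⟩ := h
      exact hms a' ha' b' hb' w hw
  · intro hsep a ha b hb w hw
    have hv : ∀ v ∈ w.verts, v ∈ G.an (A ∪ B ∪ C) :=
      MixedGraph.verts_anc Set.subset_union_right w hw
        (MixedGraph.mem_an_of_mem (Set.mem_union_left _ (Set.mem_union_left _ ha)))
        (MixedGraph.mem_an_of_mem (Set.mem_union_left _ (Set.mem_union_right _ hb)))
    exact hsep a ha b hb
      (MixedGraph.to_aug w.length w le_rfl hw hv (Set.disjoint_left.mp hBC hb))
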